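/- Let m ≥ 1 and let F¹, …, F^m be real-analytic functions on a neighborhood of 0 in ℝ^{1+2m} (variables (x, y¹, …, y^m, p¹, …, p^m)). The following are equivalent. (a) There exist real-analytic functions X, Y¹, …, Y^m on a neighborhood of 0 in ℝ^{1+m}, whose Jacobian matrix at the origin is the identity, mapping the system y_xx^j = F^j(x, y, y_x) to the free-particle system Y_XX^j = 0 (in the jet sense of the context). (b) There exist real-analytic functions X, Y¹, …, Y^m on a neighborhood of 0 in ℝ^{1+m}, whose Jacobian matrix at the origin is the identity, such that for all (x, y, p) in a neighborhood of 0 and all j ∈ {1, …, m}: 0 = F^j(x,y,p) + □^j_{xx} + Σ_{l₁=1}^m p^{l₁}·( 2□^j_{x y^{l₁}} − δ^j_{l₁}·□⁰_{xx} ) + Σ_{l₁=1}^m Σ_{l₂=1}^m p^{l₁}p^{l₂}·( □^j_{y^{l₁}y^{l₂}} − δ^j_{l₁}·□⁰_{x y^{l₂}} − δ^j_{l₂}·□⁰_{x y^{l₁}} ) − p^j·Σ_{l₁=1}^m Σ_{l₂=1}^m p^{l₁}p^{l₂}·□⁰_{y^{l₁}y^{l₂}}, where the square functions of (X,Y) are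 evaluated at (x,y), δ is the Kronecker delta, and □^k_{xx} := □^k_{y⁰y⁰}, □^k_{x y^l} := □^k_{y⁰ y^l}. -/

import Mathlib

/-- Partial derivative in the direction of the `i`-th coordinate `y^i`
(with the convention `y⁰ ≡ x`) of a function on `ℝ^{1+m}`. -/
noncomputable def pd (m : ℕ) (i : Fin (m + 1)) (f : (Fin (m + 1) → ℝ) → ℝ) :
    (Fin (m + 1) → ℝ) → ℝ :=
  fun z => fderiv ℝ f z (Pi.single i 1)

/-- `DX = X_x + Σ_l p^l X_{y^l}`. -/
noncomputable def Dop (m : ℕ) (X : (Fin (m + 1) → ℝ) → ℝ) (z : Fin (m + 1) → ℝ)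
    (p : Fin m → ℝ) : ℝ :=
  pd m 0 X z + ∑ l : Fin m, p l * pd m l.succ X z

/-- `DDX = X_xx + 2 Σ_l p^l X_{x y^l} + Σ_{l₁,l₂} p^{l₁} p^{l₂} X_{y^{l₁}y^{l₂}}
  + Σ_l q^l X_{y^l}`. -/
noncomputable def DDop (m : ℕ) (X : (Fin (m + 1) → ℝ) → ℝ) (z : Fin (m + 1) → ℝ)
    (p q : Fin m → ℝ) : ℝ :=
  pd m 0 (pd m 0 X) z + 2 * ∑ l : Fin m, p l * pd m l.succ (pd m 0 X) z
    + ∑ l₁ : Fin m, ∑ l₂ : Fin m, p l₁ * p l₂ * pd m l₂.succ (pd m l₁.succ X) z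
    + ∑ l : Fin m, q l * pd m l.succ X z

/-- `(X, Y¹, …, Y^m) = (Z 0, Z 1, …, Z m)` maps the system `y_xx^j = F^j(x,y,y_x)`
to the free-particle system `Y_XX^j = 0`: its Jacobian matrix at the origin is the
identity and `DX·DDY^j − DY^j·DDX = 0` on a neighborhood of `0` in the first-order
jet space, with `q = F(x,y,p)`. -/
def MapsToFree (m : ℕ) (F : Fin m → ((Fin (m + 1) → ℝ) × (Fin m → ℝ)) → ℝ)
    (Z : Fin (m + 1) → (Fin (m + 1) → ℝ) → ℝ) : Prop :=
  (∀ i j : Fin (m + 1), pd m j (Z i) 0 = if i = j then 1 else 0) ∧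
  ∃ V ∈ nhds (0 : (Fin (m + 1) → ℝ) × (Fin m → ℝ)), ∀ w ∈ V, ∀ j : Fin m,
    Dop m (Z 0) w.1 w.2 * DDop m (Z j.succ) w.1 w.2 (fun l => F l w)
      - Dop m (Z j.succ) w.1 w.2 * DDop m (Z 0) w.1 w.2 (fun l => F l w) = 0

/-- The Jacobian determinant `Δ(x|y¹|⋯|y^m)` of the family `Z = (X, Y¹, …, Y^m)`. -/
noncomputable def jacDet (m : ℕ) (Z : Fin (m + 1) → (Fin (m + 1) → ℝ) → ℝ)
    (z : Fin (m + 1) → ℝ) : ℝ :=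
  (Matrix.of fun i j => pd m j (Z i) z).det

/-- The modified determinant `Δ(x|⋯|^k y^{l₁}y^{l₂}|⋯|y^m)`. -/
noncomputable def jacDetRep (m : ℕ) (Z : Fin (m + 1) → (Fin (m + 1) → ℝ) → ℝ)
    (k l₁ l₂ : Fin (m + 1)) (z : Fin (m + 1) → ℝ) : ℝ :=
  (Matrix.of fun i j =>
    if j = k then pd m l₂ (pd m l₁ (Z i)) z else pd m j (Z i) z).det

/-- The square functions `□^k_{y^{l₁}y^{l₂}}`. -/
noncomputable def sqFn (m : ℕ) (Z : Fin (m + 1) → (Fin (m + 1) → ℝ) → ℝ)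
    (k l₁ l₂ : Fin (m + 1)) (z : Fin (m + 1) → ℝ) : ℝ :=
  jacDetRep m Z k l₁ l₂ z / jacDet m Z z

open Finset Matrix

/-- square function in abstract matrix form -/
noncomputable def sqA {m : ℕ} (A : Matrix (Fin (m+1)) (Fin (m+1)) ℝ)
    (S : Fin (m+1) → Fin (m+1) → Fin (m+1) → ℝ) (k a b : Fin (m+1)) : ℝ :=
  (A.updateCol k fun i => S i a b).det / A.det


lemma hdelta1 {m : ℕ} (j : Fin m) (p : Fin m → ℝ) (c : ℝ) (a : Fin m → ℝ) :
    ∑ l : Fin m, p l * (2 * a l - (if l = j then (1:ℝ) else 0) * c)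
      = 2 * ∑ l : Fin m, p l * a l - p j * c := by
  simp only [mul_sub]
  rw [Finset.sum_sub_distrib]
  congr 1
  · rw [Finset.mul_sum]
    exact Finset.sum_congr rfl fun l _ => by ring
  · simp [mul_ite, ite_mul, Finset.sum_ite_eq']

lemma hdelta2 {m : ℕ} (j : Fin m) (p : Fin m → ℝ) (g : Fin m → ℝ) :
    ∑ l₁ : Fin m, ∑ l₂ : Fin m, p l₁ * p l₂ * ((if l₁ = j then (1:ℝ) else 0) * g l₂)
      = p j * ∑ l₂ : Fin m, p l₂ * g l₂ := by
  rw [Finset.sum_eq_single j]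
  · rw [Finset.mul_sum]
    exact Finset.sum_congr rfl fun l _ => by simp; ring
  · intro b _ hb
    simp [hb]
  · simp

lemma hdelta2' {m : ℕ} (j : Fin m) (p : Fin m → ℝ) (g : Fin m → ℝ) :
    ∑ l₁ : Fin m, ∑ l₂ : Fin m, p l₁ * p l₂ * ((if l₂ = j then (1:ℝ) else 0) * g l₁)
      = p j * ∑ l₁ : Fin m, p l₁ * g l₁ := by
  rw [Finset.sum_comm]
  have := hdelta2 j p g
  convert this using 2 with l₂
  exact Finset.sum_congr rfl fun l₁ _ => by ring

theorem key (m : ℕ) (A : Matrix (Fin (m+1)) (Fin (m+1)) ℝ)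
    (S : Fin (m+1) → Fin (m+1) → Fin (m+1) → ℝ) (p q : Fin m → ℝ)
    (hd : A.det ≠ 0)
    (hDZ0 : A 0 0 + ∑ l : Fin m, p l * A 0 l.succ ≠ 0) :
    (∀ j : Fin m,
      (A 0 0 + ∑ l : Fin m, p l * A 0 l.succ) *
        (S j.succ 0 0 + 2 * ∑ l : Fin m, p l * S j.succ 0 l.succ
          + ∑ l₁ : Fin m, ∑ l₂ : Fin m, p l₁ * p l₂ * S j.succ l₁.succ l₂.succ
          + ∑ l : Fin m, q l * A j.succ l.succ)
      - (A j.succ 0 + ∑ l : Fin m, p l * A j.succ l.succ) *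
        (S 0 0 0 + 2 * ∑ l : Fin m, p l * S 0 0 l.succ
          + ∑ l₁ : Fin m, ∑ l₂ : Fin m, p l₁ * p l₂ * S 0 l₁.succ l₂.succ
          + ∑ l : Fin m, q l * A 0 l.succ) = 0)
    ↔ (∀ j : Fin m,
      (0:ℝ) = q j + sqA A S j.succ 0 0
        + ∑ l₁ : Fin m, p l₁ * (2 * sqA A S j.succ 0 l₁.succ
            - (if l₁ = j then 1 else 0) * sqA A S 0 0 0)
        + ∑ l₁ : Fin m, ∑ l₂ : Fin m, p l₁ * p l₂ *
            (sqA A S j.succ l₁.succ l₂.succ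
              - (if l₁ = j then 1 else 0) * sqA A S 0 0 l₂.succ
              - (if l₂ = j then 1 else 0) * sqA A S 0 0 l₁.succ)
        - p j * ∑ l₁ : Fin m, ∑ l₂ : Fin m, p l₁ * p l₂ *
            sqA A S 0 l₁.succ l₂.succ) := by
  classical
  set d := A.det with hd'
  set P : Fin (m+1) → ℝ := Fin.cases 1 p with hP
  set Qv : Fin (m+1) → ℝ := Fin.cases 0 q with hQ
  set Bv : Fin (m+1) → ℝ := fun i => S i 0 0 + 2 * ∑ l : Fin m, p l * S i 0 l.succ
      + ∑ l₁ : Fin m, ∑ l₂ : Fin m, p l₁ * p l₂ * S i l₁.succ l₂.succ with hBv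
  set DZ : Fin (m+1) → ℝ := fun i => A i 0 + ∑ l : Fin m, p l * A i l.succ with hDZ
  set U : Fin (m+1) → ℝ := fun i => Bv i + ∑ l : Fin m, q l * A i l.succ with hU
  set rep : Fin (m+1) → Fin (m+1) → Fin (m+1) → ℝ :=
    fun k a b => (A.updateCol k fun i => S i a b).det with hrep
  set cr : Fin (m+1) → ℝ := Matrix.cramer A Bv with hcr
  have hAP : ∀ i, (A *ᵥ P) i = DZ i := by
    intro i
    simp only [Matrix.mulVec, dotProduct, Fin.sum_univ_succ, hP, Fin.cases_zero,
      Fin.cases_succ, hDZ]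
    ring_nf
    exact congrArg _ (Finset.sum_congr rfl fun l _ => by ring)
  have hAQ : ∀ i, (A *ᵥ Qv) i = ∑ l : Fin m, q l * A i l.succ := by
    intro i
    simp only [Matrix.mulVec, dotProduct, Fin.sum_univ_succ, hQ, Fin.cases_zero,
      Fin.cases_succ, mul_zero, zero_add]
    exact Finset.sum_congr rfl fun l _ => by ring
  -- step 1
  have step1 : (∀ j : Fin m, DZ 0 * U j.succ - DZ j.succ * U 0 = 0)
      ↔ ∃ μ : ℝ, ∀ i, U i = μ * DZ i := by
    constructor
    · intro h
      have hz : DZ 0 ≠ 0 := hDZ0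
      refine ⟨U 0 / DZ 0, fun i => ?_⟩
      induction i using Fin.cases with
      | zero => field_simp
      | succ j =>
        have e := sub_eq_zero.mp (h j)
        field_simp
        linarith [e]
    · rintro ⟨μ, hμ⟩ j
      rw [hμ 0, hμ j.succ]; ring
  -- step 2
  have hmv : ∀ (μ : ℝ) (i), (A *ᵥ fun k => μ * P k - Qv k) i
      = μ * DZ i - (U i - Bv i) := by
    intro μ i
    have : (A *ᵥ fun k => μ * P k - Qv k) i = μ * (A *ᵥ P) i - (A *ᵥ Qv) i := by
      simp only [Matrix.mulVec, dotProduct, mul_sub, Finset.sum_sub_distrib,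
        Finset.mul_sum]
      congr 1
      exact Finset.sum_congr rfl fun k _ => by ring
    rw [this, hAP, hAQ, hU]
    ring
  have step2 : (∃ μ : ℝ, ∀ i, U i = μ * DZ i)
      ↔ ∀ j : Fin m, d * q j = p j * cr 0 - cr j.succ := by
    constructor
    · rintro ⟨μ, hμ⟩ j
      have hBveq : Bv = A *ᵥ fun k => μ * P k - Qv k := by
        funext i
        rw [hmv μ i, hμ i]; ring
      have hcrv : cr = fun k => d • (μ * P k - Qv k) := by
        rw [hcr, hBveq, Matrix.cramer_eq_adjugate_mulVec, Matrix.mulVec_mulVec,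
          Matrix.adjugate_mul]
        funext k
        simp [Matrix.smul_mulVec, Matrix.one_mulVec, hd']
      have h0 : cr 0 = d * μ := by simp [hcrv, hP, hQ]
      have hs : cr j.succ = d * (μ * p j - q j) := by simp [hcrv, hP, hQ]
      rw [h0, hs]; ring
    · intro h
      set μ := cr 0 / d with hμdef
      have hcrv : cr = fun k => d * (μ * P k - Qv k) := by
        funext k
        induction k using Fin.cases with
        | zero =>
          simp only [hP, hQ, Fin.cases_zero, mul_one, sub_zero, hμdef]
          field_simp
        | succ j =>
          have := h j
          simp only [hP, hQ, Fin.cases_succ, hμdef]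
          field_simp
          linarith [this]
      have hABv : d • Bv = d • (A *ᵥ fun k => μ * P k - Qv k) := by
        have := Matrix.mulVec_cramer A Bv
        rw [← hcr] at this
        have hfun : cr = d • fun k => μ * P k - Qv k := by
          funext k; simp [hcrv]
        calc d • Bv = A *ᵥ cr := this.symm
          _ = A *ᵥ (d • fun k => μ * P k - Qv k) := by rw [hfun]
          _ = d • (A *ᵥ fun k => μ * P k - Qv k) := by
              rw [Matrix.mulVec_smul]
      refine ⟨μ, fun i => ?_⟩
      have hBi : Bv i = (A *ᵥ fun k => μ * P k - Qv k) i := by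
        have := congrFun hABv i
        simp only [Pi.smul_apply, smul_eq_mul] at this
        exact mul_left_cancel₀ hd this
      have := hmv μ i
      rw [← hBi] at this
      linarith [this]
  -- step 3 : cramer expansion
  have hcrexp : ∀ k, cr k = rep k 0 0 + 2 * ∑ l : Fin m, p l * rep k 0 l.succ
      + ∑ l₁ : Fin m, ∑ l₂ : Fin m, p l₁ * p l₂ * rep k l₁.succ l₂.succ := by
    intro k
    have hBsum : Bv = (fun i => S i 0 0)
        + (∑ l : Fin m, (2 * p l) • fun i => S i 0 l.succ)
        + (∑ l₁ : Fin m, ∑ l₂ : Fin m, (p l₁ * p l₂) • fun i => S i l₁.succ l₂.succ) := by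
      funext i
      simp only [Pi.add_apply, Finset.sum_apply, Pi.smul_apply, smul_eq_mul, hBv]
      congr 1
      · congr 1
        rw [Finset.mul_sum]
        exact Finset.sum_congr rfl fun l _ => by ring
    rw [hcr, hBsum, map_add, map_add]
    simp only [map_sum, _root_.map_smul]
    simp only [Pi.add_apply, Finset.sum_apply, Pi.smul_apply, smul_eq_mul,
      Matrix.cramer_apply]
    try simp only [hrep]
    congr 1
    congr 1
    rw [Finset.mul_sum]
    exact Finset.sum_congr rfl fun l _ => by ring
  -- step 4 : the bridge identity
  have hbridge : ∀ j : Fin m,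
      q j + sqA A S j.succ 0 0
        + ∑ l₁ : Fin m, p l₁ * (2 * sqA A S j.succ 0 l₁.succ
            - (if l₁ = j then 1 else 0) * sqA A S 0 0 0)
        + ∑ l₁ : Fin m, ∑ l₂ : Fin m, p l₁ * p l₂ *
            (sqA A S j.succ l₁.succ l₂.succ
              - (if l₁ = j then 1 else 0) * sqA A S 0 0 l₂.succ
              - (if l₂ = j then 1 else 0) * sqA A S 0 0 l₁.succ)
        - p j * ∑ l₁ : Fin m, ∑ l₂ : Fin m, p l₁ * p l₂ *
            sqA A S 0 l₁.succ l₂.succ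
      = (d * q j - (p j * cr 0 - cr j.succ)) / d := by
    intro j
    have hsq : ∀ k a b, sqA A S k a b = rep k a b / d := fun _ _ _ => rfl
    simp only [hsq]
    rw [hcrexp 0, hcrexp j.succ, eq_div_iff hd]
    have e1 : (∑ l₁ : Fin m, p l₁ * (2 * (rep j.succ 0 l₁.succ / d)
          - (if l₁ = j then 1 else 0) * (rep 0 0 0 / d)))
        = (2 * ∑ l : Fin m, p l * rep j.succ 0 l.succ - p j * rep 0 0 0) / d := by
      rw [← hdelta1 j p (rep 0 0 0) (fun l => rep j.succ 0 l.succ), Finset.sum_div]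
      exact Finset.sum_congr rfl fun l _ => by ring
    have e2 : (∑ l₁ : Fin m, ∑ l₂ : Fin m, p l₁ * p l₂ *
            (rep j.succ l₁.succ l₂.succ / d
              - (if l₁ = j then 1 else 0) * (rep 0 0 l₂.succ / d)
              - (if l₂ = j then 1 else 0) * (rep 0 0 l₁.succ / d)))
        = ((∑ l₁ : Fin m, ∑ l₂ : Fin m, p l₁ * p l₂ * rep j.succ l₁.succ l₂.succ)
            - p j * (∑ l : Fin m, p l * rep 0 0 l.succ)
            - p j * (∑ l : Fin m, p l * rep 0 0 l.succ)) / d := by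
      have expand : ∀ l₁ l₂ : Fin m, p l₁ * p l₂ *
            (rep j.succ l₁.succ l₂.succ / d
              - (if l₁ = j then 1 else 0) * (rep 0 0 l₂.succ / d)
              - (if l₂ = j then 1 else 0) * (rep 0 0 l₁.succ / d))
          = (p l₁ * p l₂ * rep j.succ l₁.succ l₂.succ
              - p l₁ * p l₂ * ((if l₁ = j then 1 else 0) * rep 0 0 l₂.succ)
              - p l₁ * p l₂ * ((if l₂ = j then 1 else 0) * rep 0 0 l₁.succ)) / d := by
        intro l₁ l₂; ring
      simp only [expand, ← Finset.sum_div]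
      congr 1
      simp only [Finset.sum_sub_distrib]
      rw [hdelta2 j p (fun l => rep 0 0 l.succ), hdelta2' j p (fun l => rep 0 0 l.succ)]
    have e3 : (∑ l₁ : Fin m, ∑ l₂ : Fin m, p l₁ * p l₂ * (rep 0 l₁.succ l₂.succ / d))
        = (∑ l₁ : Fin m, ∑ l₂ : Fin m, p l₁ * p l₂ * rep 0 l₁.succ l₂.succ) / d := by
      rw [Finset.sum_div]
      exact Finset.sum_congr rfl fun l₁ _ => by
        rw [Finset.sum_div]
        exact Finset.sum_congr rfl fun l₂ _ => by ring
    rw [e1, e2, e3]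
    field_simp
    ring
  -- conclusion
  constructor
  · intro h j
    have h2 := (step2.mp (step1.mp h)) j
    have hb := hbridge j
    rw [h2, sub_self, zero_div] at hb
    exact hb.symm
  · intro h
    apply step1.mpr
    apply step2.mpr
    intro j
    have hb : (0:ℝ) = (d * q j - (p j * cr 0 - cr j.succ)) / d := by
      rw [← hbridge j]; exact h j
    have h0 : d * q j - (p j * cr 0 - cr j.succ) = 0 := by
      rcases div_eq_zero_iff.mp hb.symm with h' | h'
      · exact h'
      · exact absurd h' hd
    linarith [h0]

lemma sqFn_eq_sqA (m : ℕ) (Z : Fin (m+1) → (Fin (m+1) → ℝ) → ℝ) (k a b : Fin (m+1))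
    (z : Fin (m+1) → ℝ) :
    sqFn m Z k a b z = sqA (Matrix.of fun i j => pd m j (Z i) z)
      (fun i a b => pd m b (pd m a (Z i)) z) k a b := by
  unfold sqFn jacDetRep jacDet sqA
  congr 1
  apply congrArg Matrix.det
  ext i j
  by_cases h : j = k <;> simp [Matrix.updateCol_apply, h]

lemma good_nbhd (m : ℕ) (Z : Fin (m+1) → (Fin (m+1) → ℝ) → ℝ)
    (W : Set (Fin (m+1) → ℝ)) (hW : W ∈ nhds 0) (hZW : ∀ i, AnalyticOnNhd ℝ (Z i) W)
    (hid : ∀ i j : Fin (m+1), pd m j (Z i) 0 = if i = j then 1 else 0) :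
    ∀ᶠ w in nhds (0 : (Fin (m+1) → ℝ) × (Fin m → ℝ)),
      jacDet m Z w.1 ≠ 0 ∧ Dop m (Z 0) w.1 w.2 ≠ 0 := by
  have h0W : (0 : Fin (m+1) → ℝ) ∈ W := mem_of_mem_nhds hW
  have hpd : ∀ i k, ContinuousAt (pd m k (Z i)) 0 := by
    intro i k
    have h1 : AnalyticAt ℝ (fderiv ℝ (Z i)) 0 := (hZW i 0 h0W).fderiv
    exact ((ContinuousLinearMap.apply ℝ ℝ
      (Pi.single k (1:ℝ))).continuous.continuousAt).comp h1.continuousAt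
  have hjac : ContinuousAt (jacDet m Z) 0 := by
    have hmat : ContinuousAt (fun z => Matrix.of fun i j => pd m j (Z i) z) 0 := by
      apply continuousAt_pi.2; intro i; apply continuousAt_pi.2; intro j
      exact hpd i j
    exact ((Continuous.matrix_det continuous_id).continuousAt).comp hmat
  have hjv : jacDet m Z 0 = 1 := by
    unfold jacDet
    have : (Matrix.of fun i j => pd m j (Z i) 0)
        = (1 : Matrix (Fin (m+1)) (Fin (m+1)) ℝ) := by
      ext i j; simp [hid i j, Matrix.one_apply]
    rw [this, Matrix.det_one]
  have hd1 : ∀ᶠ z in nhds (0 : Fin (m+1) → ℝ), jacDet m Z z ≠ 0 :=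
    hjac.eventually_ne (by rw [hjv]; norm_num)
  have hd1' : ∀ᶠ w in nhds (0 : (Fin (m+1) → ℝ) × (Fin m → ℝ)), jacDet m Z w.1 ≠ 0 := by
    have hc : Filter.Tendsto (fun w : (Fin (m+1) → ℝ) × (Fin m → ℝ) => w.1)
        (nhds 0) (nhds 0) := continuousAt_fst
    exact hc.eventually hd1
  have hDop : ContinuousAt
      (fun w : (Fin (m+1) → ℝ) × (Fin m → ℝ) => Dop m (Z 0) w.1 w.2) 0 := by
    unfold Dop
    have hfst : ContinuousAt (fun w : (Fin (m+1) → ℝ) × (Fin m → ℝ) => w.1) 0 :=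
      continuousAt_fst
    apply ContinuousAt.add
    · exact Filter.Tendsto.comp (hpd 0 0) hfst
    · exact tendsto_finset_sum _ fun l _ =>
        (((continuous_apply l).comp continuous_snd).continuousAt).mul
          (Filter.Tendsto.comp (hpd 0 l.succ) hfst)
  have hDv : Dop m (Z 0) (0 : (Fin (m+1) → ℝ) × (Fin m → ℝ)).1
      (0 : (Fin (m+1) → ℝ) × (Fin m → ℝ)).2 = 1 := by
    simp [Dop, hid]
  have hd2 : ∀ᶠ w in nhds (0 : (Fin (m+1) → ℝ) × (Fin m → ℝ)),
      Dop m (Z 0) w.1 w.2 ≠ 0 :=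
    hDop.eventually_ne (by rw [hDv]; norm_num)
  exact hd1'.and hd2

/-- A system `y_xx^j = F^j(x,y,y_x)` is taken to the free particle system
`Y_XX^j = 0` by a point transformation `(X,Y)` tangent to the identity at `0`
if and only if it can be written in the explicit square-function form. -/
theorem system_equiv_flat_iff_square_form (m : ℕ) (hm : 1 ≤ m)
    (F : Fin m → ((Fin (m + 1) → ℝ) × (Fin m → ℝ)) → ℝ)
    (VF : Set ((Fin (m + 1) → ℝ) × (Fin m → ℝ)))
    (hVF : VF ∈ nhds (0 : (Fin (m + 1) → ℝ) × (Fin m → ℝ)))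
    (hF : ∀ j, AnalyticOnNhd ℝ (F j) VF) :
    (∃ Z : Fin (m + 1) → (Fin (m + 1) → ℝ) → ℝ,
      (∃ W ∈ nhds (0 : Fin (m + 1) → ℝ), ∀ i, AnalyticOnNhd ℝ (Z i) W) ∧
      MapsToFree m F Z)
    ↔
    (∃ Z : Fin (m + 1) → (Fin (m + 1) → ℝ) → ℝ,
      (∃ W ∈ nhds (0 : Fin (m + 1) → ℝ), ∀ i, AnalyticOnNhd ℝ (Z i) W) ∧
      (∀ i j : Fin (m + 1), pd m j (Z i) 0 = if i = j then 1 else 0) ∧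
      ∃ V ∈ nhds (0 : (Fin (m + 1) → ℝ) × (Fin m → ℝ)), ∀ w ∈ V, ∀ j : Fin m,
        (0 : ℝ) = F j w + sqFn m Z j.succ 0 0 w.1
          + ∑ l₁ : Fin m, w.2 l₁ *
              (2 * sqFn m Z j.succ 0 l₁.succ w.1
                - (if l₁ = j then 1 else 0) * sqFn m Z 0 0 0 w.1)
          + ∑ l₁ : Fin m, ∑ l₂ : Fin m, w.2 l₁ * w.2 l₂ *
              (sqFn m Z j.succ l₁.succ l₂.succ w.1
                - (if l₁ = j then 1 else 0) * sqFn m Z 0 0 l₂.succ w.1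
                - (if l₂ = j then 1 else 0) * sqFn m Z 0 0 l₁.succ w.1)
          - w.2 j * ∑ l₁ : Fin m, ∑ l₂ : Fin m, w.2 l₁ * w.2 l₂ *
              sqFn m Z 0 l₁.succ l₂.succ w.1) := by
  constructor
  · rintro ⟨Z, ⟨W, hW, hZW⟩, hid, V, hV, hEq⟩
    refine ⟨Z, ⟨W, hW, hZW⟩, hid, ?_⟩
    have hG := good_nbhd m Z W hW hZW hid
    refine ⟨V ∩ {w | jacDet m Z w.1 ≠ 0 ∧ Dop m (Z 0) w.1 w.2 ≠ 0},
      Filter.inter_mem hV hG, ?_⟩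
    rintro w ⟨hwV, hw1, hw2⟩ j
    have hiff := key m (Matrix.of fun i j => pd m j (Z i) w.1)
      (fun i a b => pd m b (pd m a (Z i)) w.1) w.2 (fun l => F l w) hw1 hw2
    have hres := hiff.mp (fun j' => hEq w hwV j') j
    simp only [sqFn_eq_sqA]
    exact hres
  · rintro ⟨Z, ⟨W, hW, hZW⟩, hid, V, hV, hEq⟩
    refine ⟨Z, ⟨W, hW, hZW⟩, hid, ?_⟩
    have hG := good_nbhd m Z W hW hZW hid
    refine ⟨V ∩ {w | jacDet m Z w.1 ≠ 0 ∧ Dop m (Z 0) w.1 w.2 ≠ 0},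
      Filter.inter_mem hV hG, ?_⟩
    rintro w ⟨hwV, hw1, hw2⟩ j
    have hiff := key m (Matrix.of fun i j => pd m j (Z i) w.1)
      (fun i a b => pd m b (pd m a (Z i)) w.1) w.2 (fun l => F l w) hw1 hw2
    refine hiff.mpr (fun j' => ?_) j
    have hres := hEq w hwV j'
    simp only [sqFn_eq_sqA] at hres
    exact hres
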